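/- Let 1 < p < ∞, 0 < κ < 1, let (X, d, μ) be a space of homogeneous type and v ∈ A_p(X) with the regularity property v(E)/v(B) ≤ C(μ(E)/μ(B))^σ and (μ(E)/μ(B))^p ≤ C' v(E)/v(B) for E ⊆ B. Suppose F ⊆ B̃ is measurable with μ(F) ≥ μ(B̃)/4. Then the function f = v(B̃)^{(κ−1)/p} χ_F satisfies c₁ ≤ ‖f‖_{L_v^{p,κ}(X)} ≤ c₂ for constants c₁, c₂ > 0 depending only on C, C', σ, p, κ, where ‖f‖_{L_v^{p,κ}} = sup_B ( v(B)^{-κ} ∫_B |f|^p v dμ )^{1/p}. -/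

import Mathlib

open MeasureTheory Metric ENNReal

/-- The weighted Morrey "norm" `sup_B ( v(B)^{-κ} ∫_B |f|^p v dμ )^{1/p}`. -/
noncomputable def morreyNorm {X : Type*} [MetricSpace X] [MeasurableSpace X]
    (μ : MeasureTheory.Measure X) (v : X → ℝ) (p κ : ℝ) (f : X → ℝ) : ℝ≥0∞ :=
  ⨆ (x : X) (r : ℝ) (_ : 0 < r),
    ((∫⁻ y in ball x r, (‖f y‖₊ : ℝ≥0∞) ^ p * ENNReal.ofReal (v y) ∂μ) /
      (∫⁻ y in ball x r, ENNReal.ofReal (v y) ∂μ) ^ κ) ^ (1 / p)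

/-- Normalized indicator test functions: if `v` has the `A_p`-type regularity and reverse
regularity properties, and `F ⊆ B̃` has `μ(F) ≥ μ(B̃)/4`, then
`f = v(B̃)^{(κ-1)/p} χ_F` satisfies `c₁ ≤ ‖f‖_{L_v^{p,κ}} ≤ c₂` for constants
`c₁, c₂ > 0` independent of `B̃` and `F`. -/
theorem stmt14 {X : Type*} [MetricSpace X] [MeasurableSpace X] [BorelSpace X]
    (μ : Measure X) [IsUnifLocDoublingMeasure μ]
    (p κ : ℝ) (hp : 1 < p) (hκ0 : 0 < κ) (hκ1 : κ < 1)
    (v : X → ℝ) (hv0 : ∀ x, 0 ≤ v x) (hvloc : LocallyIntegrable v μ)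
    (hvB : ∀ (x : X) (r : ℝ), 0 < r →
      0 < ∫⁻ y in ball x r, ENNReal.ofReal (v y) ∂μ ∧
        ∫⁻ y in ball x r, ENNReal.ofReal (v y) ∂μ < ⊤)
    (C C' σ : ℝ) (hC : 0 < C) (hC' : 0 < C') (hσ : 0 < σ)
    (hreg : ∀ (x : X) (r : ℝ), 0 < r → ∀ E ⊆ ball x r, MeasurableSet E →
      ∫⁻ y in E, ENNReal.ofReal (v y) ∂μ ≤
        ENNReal.ofReal C * (μ E / μ (ball x r)) ^ σ *
          ∫⁻ y in ball x r, ENNReal.ofReal (v y) ∂μ)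
    (hrev : ∀ (x : X) (r : ℝ), 0 < r → ∀ E ⊆ ball x r, MeasurableSet E →
      (μ E / μ (ball x r)) ^ p ≤
        ENNReal.ofReal C' * ((∫⁻ y in E, ENNReal.ofReal (v y) ∂μ) /
          ∫⁻ y in ball x r, ENNReal.ofReal (v y) ∂μ)) :
    ∃ c₁ > (0 : ℝ), ∃ c₂ > (0 : ℝ), ∀ (w₀ : X) (r₀ : ℝ), 0 < r₀ →
      ∀ F ⊆ ball w₀ r₀, MeasurableSet F → μ (ball w₀ r₀) ≤ 4 * μ F →
        ENNReal.ofReal c₁ ≤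
          morreyNorm μ v p κ (fun z =>
            (∫⁻ y in ball w₀ r₀, ENNReal.ofReal (v y) ∂μ).toReal ^ ((κ - 1) / p) *
              F.indicator (fun _ => (1 : ℝ)) z) ∧
        morreyNorm μ v p κ (fun z =>
            (∫⁻ y in ball w₀ r₀, ENNReal.ofReal (v y) ∂μ).toReal ^ ((κ - 1) / p) *
              F.indicator (fun _ => (1 : ℝ)) z) ≤ ENNReal.ofReal c₂ := by

  have hp0 : (0:ℝ) < p := lt_trans one_pos hp
  have hpne : p ≠ 0 := ne_of_gt hp0
  have h1p : (0:ℝ) ≤ 1/p := by positivity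
  have hC'0 : ENNReal.ofReal C' ≠ 0 := by
    simp [ENNReal.ofReal_eq_zero, not_le, hC']
  have hC'T : ENNReal.ofReal C' ≠ ⊤ := ENNReal.ofReal_ne_top
  set base : ℝ≥0∞ := (4:ℝ≥0∞)⁻¹ ^ p / ENNReal.ofReal C' with hbase
  have hnum0 : ((4:ℝ≥0∞)⁻¹ ^ p) ≠ 0 :=
    (ENNReal.rpow_pos (by norm_num) (by norm_num)).ne'
  have hnumT : ((4:ℝ≥0∞)⁻¹ ^ p) ≠ ⊤ :=
    ENNReal.rpow_ne_top_of_nonneg hp0.le (by norm_num)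
  have hbase0 : base ≠ 0 := by
    simp [hbase, ENNReal.div_eq_zero_iff, hnum0, hC'T]
  have hbaseT : base ≠ ⊤ := by
    simp [hbase, ENNReal.div_eq_top, hnum0, hnumT, hC'0]
  set e : ℝ≥0∞ := base ^ (1/p) with he
  have he0 : e ≠ 0 := by
    simp [he, ENNReal.rpow_eq_zero_iff, hbase0, hbaseT]
  have heT : e ≠ ⊤ := ENNReal.rpow_ne_top_of_nonneg h1p hbaseT
  refine ⟨e.toReal, ENNReal.toReal_pos he0 heT, 1, one_pos, ?_⟩
  intro w₀ r₀ hr₀ F hF hFm hμF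
  set V : ℝ≥0∞ := ∫⁻ y in ball w₀ r₀, ENNReal.ofReal (v y) ∂μ with hV
  obtain ⟨hV0, hVT⟩ := hvB w₀ r₀ hr₀
  have hVne : V ≠ 0 := hV0.ne'
  have hVtop : V ≠ ⊤ := hVT.ne
  -- μ (ball w₀ r₀) is finite and positive
  have hμBT : μ (ball w₀ r₀) ≠ ⊤ := by
    intro htop
    have h := hreg w₀ r₀ hr₀ (ball w₀ r₀) subset_rfl measurableSet_ball
    rw [htop, ENNReal.div_top, ENNReal.zero_rpow_of_pos hσ, mul_zero, zero_mul] at h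
    exact hVne (le_antisymm h zero_le)
  have hμB0 : μ (ball w₀ r₀) ≠ 0 := by
    intro h0
    apply hVne
    rw [hV, Measure.restrict_eq_zero.mpr h0, lintegral_zero_measure]
  -- the pointwise identity and the integral identity
  have hVkm1T : V ^ (κ - 1) ≠ ⊤ := by
    simp [ENNReal.rpow_eq_top_iff, hVne, hVtop]
  have hVkm1F : V ^ ((κ-1)/p) ≠ ⊤ := by
    simp [ENNReal.rpow_eq_top_iff, hVne, hVtop]
  have hInt : ∀ (x : X) (r : ℝ),
      ∫⁻ y in ball x r,
        (‖V.toReal ^ ((κ-1)/p) * F.indicator (fun _ => (1:ℝ)) y‖₊ : ℝ≥0∞) ^ p *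
          ENNReal.ofReal (v y) ∂μ
      = V ^ (κ - 1) * ∫⁻ y in F ∩ ball x r, ENNReal.ofReal (v y) ∂μ := by
    intro x r
    have hpt : ∀ y, (‖V.toReal ^ ((κ-1)/p) * F.indicator (fun _ => (1:ℝ)) y‖₊ : ℝ≥0∞) ^ p *
        ENNReal.ofReal (v y)
        = F.indicator (fun y => V ^ (κ-1) * ENNReal.ofReal (v y)) y := by
      intro y
      by_cases hy : y ∈ F
      · rw [Set.indicator_of_mem hy, Set.indicator_of_mem hy, mul_one]
        congr 1
        have ht : (0:ℝ) ≤ V.toReal ^ ((κ-1)/p) := Real.rpow_nonneg ENNReal.toReal_nonneg _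
        rw [← enorm_eq_nnnorm, Real.enorm_eq_ofReal ht, ENNReal.toReal_rpow, ENNReal.ofReal_toReal hVkm1F,
          ← ENNReal.rpow_mul, div_mul_cancel₀ _ hpne]
      · rw [Set.indicator_of_notMem hy, Set.indicator_of_notMem hy, mul_zero]
        rw [nnnorm_zero]
        simp [ENNReal.zero_rpow_of_pos hp0]
    simp_rw [hpt]
    rw [lintegral_indicator hFm, Measure.restrict_restrict hFm,
      lintegral_const_mul' _ _ hVkm1T]
  have hmn : morreyNorm μ v p κ (fun z =>
        V.toReal ^ ((κ - 1) / p) * F.indicator (fun _ => (1 : ℝ)) z)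
      = ⨆ (x : X) (r : ℝ) (_ : 0 < r),
        ((V ^ (κ - 1) * ∫⁻ y in F ∩ ball x r, ENNReal.ofReal (v y) ∂μ) /
          (∫⁻ y in ball x r, ENNReal.ofReal (v y) ∂μ) ^ κ) ^ (1 / p) := by
    rw [morreyNorm]
    refine iSup_congr fun x => iSup_congr fun r => iSup_congr fun hr => ?_
    rw [hInt x r]
  rw [hmn]
  constructor
  · -- lower bound
    have hFB : F ∩ ball w₀ r₀ = F := Set.inter_eq_left.mpr hF
    set vF : ℝ≥0∞ := ∫⁻ y in F, ENNReal.ofReal (v y) ∂μ with hvF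
    have hkey := hrev w₀ r₀ hr₀ F hF hFm
    have quarter : (4:ℝ≥0∞)⁻¹ ≤ μ F / μ (ball w₀ r₀) := by
      rw [ENNReal.le_div_iff_mul_le (Or.inl hμB0) (Or.inl hμBT)]
      calc (4:ℝ≥0∞)⁻¹ * μ (ball w₀ r₀) ≤ (4:ℝ≥0∞)⁻¹ * (4 * μ F) := by gcongr
        _ = μ F := by
            rw [← mul_assoc, ENNReal.inv_mul_cancel (by norm_num) (by norm_num), one_mul]
    have h2 : (4:ℝ≥0∞)⁻¹ ^ p ≤ ENNReal.ofReal C' * (vF / V) :=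
      le_trans (ENNReal.rpow_le_rpow quarter hp0.le) hkey
    have h3 : base ≤ vF / V := ENNReal.div_le_of_le_mul' h2
    have hVk0 : V ^ κ ≠ 0 := by
      simp [ENNReal.rpow_eq_zero_iff, hVne, hVtop]
    have hVkT : V ^ κ ≠ ⊤ := by
      simp [ENNReal.rpow_eq_top_iff, hVne, hVtop]
    have hratio : V ^ (κ-1) * vF / V ^ κ = vF / V := by
      have h1 : V ^ (κ-1) = V ^ κ * V⁻¹ := by
        rw [← ENNReal.rpow_neg_one V, ← ENNReal.rpow_add _ _ hVne hVtop,
          show κ + -1 = κ - 1 by ring]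
      rw [h1, div_eq_mul_inv, div_eq_mul_inv]
      calc V ^ κ * V⁻¹ * vF * (V ^ κ)⁻¹ = V ^ κ * (V ^ κ)⁻¹ * (vF * V⁻¹) := by ring
        _ = vF * V⁻¹ := by rw [ENNReal.mul_inv_cancel hVk0 hVkT, one_mul]
    have hterm : e ≤ ((V ^ (κ - 1) * ∫⁻ y in F ∩ ball w₀ r₀, ENNReal.ofReal (v y) ∂μ) /
        (∫⁻ y in ball w₀ r₀, ENNReal.ofReal (v y) ∂μ) ^ κ) ^ (1 / p) := by
      rw [hFB, ← hV, ← hvF, hratio]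
      exact ENNReal.rpow_le_rpow h3 h1p
    rw [ENNReal.ofReal_toReal heT]
    exact le_trans hterm (le_iSup_of_le w₀ (le_iSup_of_le r₀ (le_iSup_of_le hr₀ le_rfl)))
  · -- upper bound
    rw [ENNReal.ofReal_one]
    refine iSup_le fun x => iSup_le fun r => iSup_le fun hr => ?_
    obtain ⟨ha0, haT⟩ := hvB x r hr
    set a : ℝ≥0∞ := ∫⁻ y in ball x r, ENNReal.ofReal (v y) ∂μ with hadef
    set b : ℝ≥0∞ := ∫⁻ y in F ∩ ball x r, ENNReal.ofReal (v y) ∂μ with hbdef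
    have hbV : b ≤ V :=
      lintegral_mono_set (Set.inter_subset_left.trans hF)
    have hba : b ≤ a := lintegral_mono_set Set.inter_subset_right
    have hbsplit : b ^ (1-κ) * b ^ κ = b := by
      rw [← ENNReal.rpow_add_of_nonneg (1-κ) κ (by linarith) hκ0.le]
      norm_num
    have key : V ^ (κ-1) * b ≤ a ^ κ := by
      calc V ^ (κ-1) * b = V ^ (κ-1) * (b ^ (1-κ) * b ^ κ) := by rw [hbsplit]
        _ ≤ V ^ (κ-1) * (V ^ (1-κ) * a ^ κ) := by
            exact mul_le_mul_right (mul_le_mul'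
              (ENNReal.rpow_le_rpow hbV (by linarith))
              (ENNReal.rpow_le_rpow hba hκ0.le)) _
        _ = V ^ (κ-1) * V ^ (1-κ) * a ^ κ := by ring
        _ = a ^ κ := by
            rw [← ENNReal.rpow_add _ _ hVne hVtop]
            have : κ - 1 + (1 - κ) = 0 := by ring
            rw [this, ENNReal.rpow_zero, one_mul]
    have hdiv : V ^ (κ-1) * b / a ^ κ ≤ 1 :=
      ENNReal.div_le_of_le_mul (by rw [one_mul]; exact key)
    calc (V ^ (κ-1) * b / a ^ κ) ^ (1/p) ≤ (1:ℝ≥0∞) ^ (1/p) :=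
          ENNReal.rpow_le_rpow hdiv h1p
      _ = 1 := ENNReal.one_rpow _
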